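/- Let p ≡ 1 (mod 6) be a prime, r ≥ 2, and let χ be a nontrivial cubic multiplicative character of F_{p^r} whose restriction to the prime field F_p is nontrivial. Suppose there exists β ∈ F_p such that X^r − β is irreducible over F_p, and let α ∈ F_{p^r} be a root of X^r − β. Then G_r(1,χ) = χ̄(r) · G_1(1,χ) · B_{r,1}(α), where B_{r,1}(α) = Σ_{z_1,…,z_{r−1} ∈ F_p} χ(1 + Σ_{i=1}^{r−1} z_i α^i) and G_1(1,χ) is the Gauss sum over F_p of the restriction of χ. Moreover, with ζ_3 = exp(2πi/3), one can write B_{r,1}(α) = B_0 + B_1 ζ_3 + B_2 ζ_3² with nonnegative integers B_0, B_1, B_2 satisfying B_0 + B_1 + B_2 = p^{r−1} and B_0² + B_1² + B_2² − B_0B_1 − B_1B_2 − B_2B_0 = p^{r−1}. -/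

import Mathlib

open Finset

/-- `ζ_p = exp(2πi/p)`. -/
noncomputable def zetaC (p : ℕ) : ℂ := Complex.exp (2 * (Real.pi : ℂ) * Complex.I / (p : ℂ))

/-- `ζ_3 = exp(2πi/3)`. -/
noncomputable def zeta3 : ℂ := Complex.exp (2 * (Real.pi : ℂ) * Complex.I / 3)

/-- The Gauss sum `G_n(1,χ) = Σ_{y ∈ F} χ(y) ζ_p^{Tr(y)}` of a function `χ : F → ℂ`
over a finite field `F` of characteristic `p`. -/
noncomputable def gaussSumF (p : ℕ) (F : Type) [Field F] [Fintype F] [Algebra (ZMod p) F]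
    (χ : F → ℂ) : ℂ :=
  ∑ y : F, χ y * zetaC p ^ (Algebra.trace (ZMod p) F y).val

/-- The Gauss sum `G_1(1,χ) = Σ_{y ∈ F_p} χ(y) ζ_p^y` over the prime field `F_p = ZMod p`. -/
noncomputable def gaussSumP (p : ℕ) [NeZero p] (χ : ZMod p → ℂ) : ℂ :=
  ∑ y : ZMod p, χ y * zetaC p ^ y.val

/-- The factor `B_{r,1}(α) = Σ_{z_1,…,z_{r−1} ∈ F_p} χ(1 + Σ_i z_i α^i)`. -/
noncomputable def Bfactor (p : ℕ) [NeZero p] (r : ℕ) (K : Type) [Field K]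
    [Algebra (ZMod p) K] (χ : K → ℂ) (α : K) : ℂ :=
  ∑ z : Fin (r - 1) → ZMod p,
    χ (1 + ∑ i : Fin (r - 1), algebraMap (ZMod p) K (z i) * α ^ ((i : ℕ) + 1))

lemma abs_eq_one_of_pow {z : ℂ} {m : ℕ} (hm : m ≠ 0) (h : z ^ m = 1) : ‖z‖ = 1 :=
  (pow_left_strictMonoOn₀ hm).injOn (Set.mem_setOf.2 (by positivity)) (Set.mem_setOf.2 zero_le_one)
    (by rw [← norm_pow, h, norm_one, one_pow])

lemma conj_eq_inv_of_pow {z : ℂ} {m : ℕ} (hm : m ≠ 0) (h : z ^ m = 1) :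
    (starRingEnd ℂ) z = z⁻¹ := (Complex.inv_eq_conj (abs_eq_one_of_pow hm h)).symm

lemma zeta3_pow_three : zeta3 ^ 3 = 1 :=
  (Complex.isPrimitiveRoot_exp 3 (by norm_num)).pow_eq_one

lemma zeta3_ne_one : zeta3 ≠ 1 :=
  (Complex.isPrimitiveRoot_exp 3 (by norm_num)).ne_one (by norm_num)

lemma zeta3_sq_add : zeta3 ^ 2 + zeta3 + 1 = 0 := by
  have h : (zeta3 - 1) * (zeta3 ^ 2 + zeta3 + 1) = 0 := by
    linear_combination zeta3_pow_three
  rcases mul_eq_zero.mp h with h' | h'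
  · exact absurd (sub_eq_zero.mp h') zeta3_ne_one
  · exact h'

lemma cube_root_cases {t : ℂ} (h : t ^ 3 = 1) : t = 1 ∨ t = zeta3 ∨ t = zeta3 ^ 2 := by
  have key : (t - 1) * ((t - zeta3) * (t - zeta3 ^ 2)) = 0 := by
    linear_combination h + (-t ^ 2 + t) * zeta3_sq_add + (t - 1) * zeta3_pow_three
  rcases mul_eq_zero.mp key with h' | h'
  · exact Or.inl (sub_eq_zero.mp h')
  · rcases mul_eq_zero.mp h' with h'' | h''
    · exact Or.inr (Or.inl (sub_eq_zero.mp h''))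
    · exact Or.inr (Or.inr (sub_eq_zero.mp h''))

theorem stmt15 (p r : ℕ) [NeZero p] (hp : p.Prime) (hp6 : p % 6 = 1) (hr : 2 ≤ r)
    (K : Type) [Field K] [Fintype K] [Algebra (ZMod p) K]
    (hcard : Fintype.card K = p ^ r)
    (χ : MulChar K ℂ) (hord : orderOf χ = 3)
    (hres : ∃ y : ZMod p, y ≠ 0 ∧ χ (algebraMap (ZMod p) K y) ≠ 1)
    (β : ZMod p) (hirr : Irreducible (Polynomial.X ^ r - Polynomial.C β))
    (α : K) (hα : α ^ r = algebraMap (ZMod p) K β) :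
    gaussSumF p K (fun y => χ y) =
      (starRingEnd ℂ) (χ (r : K)) *
        gaussSumP p (fun y => χ (algebraMap (ZMod p) K y)) *
        Bfactor p r K (fun y => χ y) α ∧
    ∃ B0 B1 B2 : ℕ,
      Bfactor p r K (fun y => χ y) α = (B0 : ℂ) + (B1 : ℂ) * zeta3 + (B2 : ℂ) * zeta3 ^ 2 ∧
      B0 + B1 + B2 = p ^ (r - 1) ∧
      (B0 : ℤ) ^ 2 + (B1 : ℤ) ^ 2 + (B2 : ℤ) ^ 2 - B0 * B1 - B1 * B2 - B2 * B0 =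
        (p : ℤ) ^ (r - 1) := by
  classical
  have hpF : Fact p.Prime := ⟨hp⟩
  obtain ⟨n, rfl⟩ : ∃ n, r = n + 1 := ⟨r - 1, (Nat.succ_pred_eq_of_pos (by omega)).symm⟩
  have hrsub : n + 1 - 1 = n := by omega
  set ι := algebraMap (ZMod p) K with hι
  have hp1 : 1 < p := hp.one_lt
  have hζ : IsPrimitiveRoot (zetaC p) p := Complex.isPrimitiveRoot_exp p (NeZero.ne p)
  have hζp : zetaC p ^ p = 1 := hζ.pow_eq_one
  set e : AddChar (ZMod p) ℂ := AddChar.zmodChar p hζp with he_def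
  have he : ∀ a : ZMod p, e a = zetaC p ^ a.val := fun a => rfl
  set ψ : AddChar K ℂ := e.compAddMonoidHom (Algebra.trace (ZMod p) K).toAddMonoidHom with hψ_def
  have hψ : ∀ y : K, ψ y = e (Algebra.trace (ZMod p) K y) := fun y => rfl
  -- χ values are cube roots of unity
  have hχ3 : ∀ x : K, x ≠ 0 → χ x ^ 3 = 1 := by
    intro x hx
    have h := pow_orderOf_eq_one χ
    rw [hord] at h
    calc χ x ^ 3 = (χ ^ 3) x := (MulChar.pow_apply' χ three_ne_zero x).symm
    _ = (1 : MulChar K ℂ) x := by rw [h]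
    _ = 1 := MulChar.one_apply (isUnit_iff_ne_zero.mpr hx)
  have hconjχ : ∀ x : K, (starRingEnd ℂ) (χ x) = (χ x)⁻¹ := by
    intro x
    by_cases hx : x = 0
    · simp [hx, MulChar.map_zero]
    · exact conj_eq_inv_of_pow three_ne_zero (hχ3 x hx)
  have hconjψ : ∀ y : K, (starRingEnd ℂ) (ψ y) = (ψ y)⁻¹ := by
    intro y
    exact conj_eq_inv_of_pow (NeZero.ne p) (by rw [hψ, he, ← pow_mul, mul_comm, pow_mul, hζp, one_pow])
  have hconje : ∀ a : ZMod p, (starRingEnd ℂ) (e a) = (e a)⁻¹ := by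
    intro a
    exact conj_eq_inv_of_pow (NeZero.ne p) (by rw [he, ← pow_mul, mul_comm, pow_mul, hζp, one_pow])
  -- finrank
  have hfin : Module.finrank (ZMod p) K = n + 1 := by
    have h := Module.card_eq_pow_finrank (K := ZMod p) (V := K)
    rw [ZMod.card, hcard] at h
    exact Nat.pow_right_injective hp.two_le h.symm
  -- p does not divide r
  have hpr : ¬ p ∣ (n + 1) := by
    intro hdvd
    obtain ⟨m, hm⟩ := hdvd
    have hm0 : m ≠ 0 := by rintro rfl; omega
    have hpow : (Polynomial.X ^ m - Polynomial.C β : Polynomial (ZMod p)) ^ p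
        = Polynomial.X ^ (n + 1) - Polynomial.C β := by
      rw [sub_pow_char, ← Polynomial.C_pow, ZMod.pow_card, ← pow_mul, mul_comm m p, ← hm]
    rw [← hpow] at hirr
    have hq : ¬ IsUnit (Polynomial.X ^ m - Polynomial.C β : Polynomial (ZMod p)) := by
      intro hu
      have := Polynomial.natDegree_eq_zero_of_isUnit hu
      rw [Polynomial.natDegree_X_pow_sub_C] at this
      exact hm0 this
    have hsplit : (Polynomial.X ^ m - Polynomial.C β : Polynomial (ZMod p)) ^ p
        = (Polynomial.X ^ m - Polynomial.C β) ^ (p - 1) * (Polynomial.X ^ m - Polynomial.C β) := by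
      rw [← pow_succ]; congr 1; omega
    rcases hirr.isUnit_or_isUnit hsplit with hu | hu
    · exact hq ((isUnit_pow_iff (by omega : p - 1 ≠ 0)).mp hu)
    · exact hq hu
  have hrK : ((n + 1 : ℕ) : ZMod p) ≠ 0 := by
    rwa [Ne, ZMod.natCast_eq_zero_iff]
  -- minpoly and power basis
  have hmonic : (Polynomial.X ^ (n + 1) - Polynomial.C β : Polynomial (ZMod p)).Monic :=
    Polynomial.monic_X_pow_sub_C β (by omega)
  have haev : Polynomial.aeval α (Polynomial.X ^ (n + 1) - Polynomial.C β) = 0 := by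
    simp [hα, hι]
  have hmin : minpoly (ZMod p) α = Polynomial.X ^ (n + 1) - Polynomial.C β :=
    (minpoly.eq_of_irreducible_of_monic hirr haev hmonic).symm
  have hdeg : (minpoly (ZMod p) α).natDegree = n + 1 := by
    rw [hmin]; exact Polynomial.natDegree_X_pow_sub_C
  have hli : LinearIndependent (ZMod p) (fun i : Fin (n + 1) => α ^ (i : ℕ)) := by
    have h := linearIndependent_pow (K := ZMod p) α
    rwa [hdeg] at h
  set b : Module.Basis (Fin (n + 1)) (ZMod p) K :=
    basisOfLinearIndependentOfCardEqFinrank hli (by simp [hfin]) with hb_def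
  have hb : ∀ i, b i = α ^ (i : ℕ) := by
    intro i
    rw [hb_def, coe_basisOfLinearIndependentOfCardEqFinrank]
  -- trace computations
  have htr0 : ∀ i : Fin (n + 1), i ≠ 0 → Algebra.trace (ZMod p) K (α ^ (i : ℕ)) = 0 := by
    intro i hi
    have hii : (i : ℕ) ≠ 0 := fun h => hi (Fin.ext h)
    rw [Algebra.trace_eq_matrix_trace b, Matrix.trace]
    apply Finset.sum_eq_zero
    intro j _
    rw [Matrix.diag_apply, Algebra.leftMulMatrix_eq_repr_mul, hb j, ← pow_add]
    have hi1 := i.isLt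
    have hj1 := j.isLt
    by_cases hlt : (i : ℕ) + (j : ℕ) < n + 1
    · have hbij : α ^ ((i : ℕ) + (j : ℕ)) = b ⟨(i : ℕ) + (j : ℕ), hlt⟩ := by rw [hb]
      rw [hbij, b.repr_self, Finsupp.single_apply, if_neg (by rw [Fin.ext_iff, Fin.val_mk]; omega)]
    · have hub : (i : ℕ) + (j : ℕ) - (n + 1) < n + 1 := by omega
      have hbij : α ^ ((i : ℕ) + (j : ℕ)) = β • b ⟨(i : ℕ) + (j : ℕ) - (n + 1), hub⟩ := by
        rw [hb, Algebra.smul_def, ← hι, ← hα, ← pow_add]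
        congr 1
        simp only []
        omega
      rw [hbij, map_smul, Finsupp.smul_apply, b.repr_self, Finsupp.single_apply,
        if_neg (by rw [Fin.ext_iff, Fin.val_mk]; omega), smul_zero]
  have htr1 : Algebra.trace (ZMod p) K 1 = ((n + 1 : ℕ) : ZMod p) := by
    have h := Algebra.trace_algebraMap (R := ZMod p) (S := K) 1
    rw [map_one] at h
    rw [h, hfin]
    simp
  -- the auxiliary sum w
  set w : (Fin n → ZMod p) → K := fun z => ∑ i : Fin n, z i • α ^ ((i : ℕ) + 1) with hw_def
  have hw_tr : ∀ z, Algebra.trace (ZMod p) K (w z) = 0 := by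
    intro z
    rw [hw_def, map_sum]
    apply Finset.sum_eq_zero
    intro i _
    rw [map_smul]
    have h := htr0 ⟨(i : ℕ) + 1, by omega⟩ (by simp [Fin.ext_iff])
    simp only [] at h
    rw [h, smul_zero]
  have hw_smul : ∀ (c : ZMod p) z, w (fun i => c * z i) = ι c * w z := by
    intro c z
    rw [hw_def]
    simp only [Finset.mul_sum]
    apply Finset.sum_congr rfl
    intro i _
    rw [mul_smul, Algebra.smul_def, ← hι]
  have hBf : Bfactor p (n + 1) K (fun y => χ y) α = ∑ z : Fin n → ZMod p, χ (1 + w z) := by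
    show (∑ z : Fin n → ZMod p,
        χ (1 + ∑ i : Fin n, ι (z i) * α ^ ((i : ℕ) + 1))) = _
    apply Fintype.sum_congr
    intro z
    rw [hw_def]
    simp only [Algebra.smul_def, ← hι]
  -- nonvanishing of 1 + w z
  have h1w : ∀ z, (1 : K) + w z ≠ 0 := by
    intro z hzero
    have hv : (1 : K) + w z = b.equivFun.symm (Fin.cons 1 z) := by
      rw [Module.Basis.equivFun_symm_apply, Fin.sum_univ_succ, Fin.cons_zero, hb]
      simp only [Fin.val_zero, pow_zero, one_smul]
      congr 1
      apply Finset.sum_congr rfl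
      intro i _
      rw [Fin.cons_succ, hb, Fin.val_succ]
    rw [hv] at hzero
    have h0 : (Fin.cons 1 z : Fin (n+1) → ZMod p) = 0 :=
      b.equivFun.symm.injective (by rw [hzero, map_zero])
    have := congrFun h0 0
    rw [Fin.cons_zero] at this
    exact one_ne_zero this
  set B : ℂ := ∑ z : Fin n → ZMod p, χ (1 + w z) with hB_def
  have hscale : ∀ (c : ZMod p), c ≠ 0 → ∀ f : (Fin n → ZMod p) → ℂ,
      (∑ z : Fin n → ZMod p, f (fun i => c * z i)) = ∑ z : Fin n → ZMod p, f z := by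
    intro c hc f
    exact Fintype.sum_equiv (Equiv.piCongrRight fun _ => Equiv.mulLeft₀ c hc) _ _ (fun z => rfl)
  have hS0 : (∑ z : Fin n → ZMod p, χ (w z)) = 0 := by
    obtain ⟨c, hc0, hc1⟩ := hres
    have hstep : χ (ι c) * (∑ z : Fin n → ZMod p, χ (w z)) = ∑ z : Fin n → ZMod p, χ (w z) := by
      rw [Finset.mul_sum]
      calc (∑ z : Fin n → ZMod p, χ (ι c) * χ (w z))
          = ∑ z : Fin n → ZMod p, χ (w (fun i => c * z i)) := by
            apply Finset.sum_congr rfl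
            intro z _
            rw [hw_smul, map_mul]
        _ = ∑ z : Fin n → ZMod p, χ (w z) := hscale c hc0 (fun z => χ (w z))
    by_contra hS
    exact hc1 (mul_right_cancel₀ hS (by rw [hstep, one_mul]))
  have hinner : ∀ z0 : ZMod p,
      (∑ z : Fin n → ZMod p, χ (ι z0 + w z)) = χ (ι z0) * B := by
    intro z0
    by_cases hz0 : z0 = 0
    · subst hz0
      simp only [map_zero, zero_add]
      rw [hS0, MulChar.map_zero, zero_mul]
    · calc (∑ z : Fin n → ZMod p, χ (ι z0 + w z))
          = ∑ z : Fin n → ZMod p, χ (ι z0 + w (fun i => z0 * z i)) :=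
            (hscale z0 hz0 (fun z => χ (ι z0 + w z))).symm
        _ = ∑ z : Fin n → ZMod p, χ (ι z0) * χ (1 + w z) := by
            apply Finset.sum_congr rfl
            intro z _
            rw [hw_smul, ← map_mul]
            congr 1
            ring
        _ = χ (ι z0) * B := by rw [hB_def, Finset.mul_sum]
  have hψtr : ∀ (z0 : ZMod p) (z : Fin n → ZMod p),
      ψ (ι z0 + w z) = e (z0 * ((n + 1 : ℕ) : ZMod p)) := by
    intro z0 z
    rw [hψ]
    congr 1
    rw [map_add, hw_tr, add_zero]
    have h : Algebra.trace (ZMod p) K (ι z0) = Module.finrank (ZMod p) K • z0 :=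
      Algebra.trace_algebraMap z0
    rw [h, hfin, nsmul_eq_mul]
    exact mul_comm _ _
  have hdecomp : ∀ (z0 : ZMod p) (z : Fin n → ZMod p),
      b.equivFun.symm (Fin.cons z0 z) = ι z0 + w z := by
    intro z0 z
    rw [Module.Basis.equivFun_symm_apply, Fin.sum_univ_succ, Fin.cons_zero, hb]
    simp only [Fin.val_zero, pow_zero]
    rw [Algebra.smul_def, mul_one, ← hι]
    congr 1
    apply Finset.sum_congr rfl
    intro i _
    rw [Fin.cons_succ, hb, Fin.val_succ]
  have key : gaussSumF p K (fun y => χ y)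
      = (∑ z0 : ZMod p, χ (ι z0) * e (z0 * ((n + 1 : ℕ) : ZMod p))) * B := by
    have h1 : gaussSumF p K (fun y => χ y)
        = ∑ z : Fin (n + 1) → ZMod p, χ (b.equivFun.symm z) * ψ (b.equivFun.symm z) := by
      rw [gaussSumF]
      exact (Fintype.sum_equiv b.equivFun.toEquiv.symm
        (fun z => χ (b.equivFun.symm z) * ψ (b.equivFun.symm z))
        (fun y => χ y * zetaC p ^ (Algebra.trace (ZMod p) K y).val)
        (fun z => rfl)).symm
    rw [h1]
    calc (∑ z : Fin (n + 1) → ZMod p, χ (b.equivFun.symm z) * ψ (b.equivFun.symm z))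
        = ∑ q : ZMod p × (Fin n → ZMod p),
            χ (b.equivFun.symm (Fin.cons q.1 q.2)) * ψ (b.equivFun.symm (Fin.cons q.1 q.2)) :=
          (Fintype.sum_equiv (Fin.consEquiv (fun _ : Fin (n + 1) => ZMod p)) _ _
            (fun q => rfl)).symm
      _ = ∑ z0 : ZMod p, ∑ z : Fin n → ZMod p,
            χ (ι z0 + w z) * e (z0 * ((n + 1 : ℕ) : ZMod p)) := by
          rw [Fintype.sum_prod_type]
          apply Finset.sum_congr rfl
          intro z0 _
          apply Finset.sum_congr rfl
          intro z _
          rw [hdecomp, hψtr]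
      _ = ∑ z0 : ZMod p, (χ (ι z0) * B) * e (z0 * ((n + 1 : ℕ) : ZMod p)) := by
          apply Finset.sum_congr rfl
          intro z0 _
          rw [← Finset.sum_mul, hinner]
      _ = (∑ z0 : ZMod p, χ (ι z0) * e (z0 * ((n + 1 : ℕ) : ZMod p))) * B := by
          rw [Finset.sum_mul]
          apply Finset.sum_congr rfl
          intro z0 _
          ring
  have hTsum : (∑ z0 : ZMod p, χ (ι z0) * e (z0 * ((n + 1 : ℕ) : ZMod p)))
      = (starRingEnd ℂ) (χ ((n + 1 : ℕ) : K)) * gaussSumP p (fun y => χ (ι y)) := by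
    have hu : ((n + 1 : ℕ) : ZMod p) ≠ 0 := hrK
    have h2 : (∑ z0 : ZMod p, χ (ι z0) * e (z0 * ((n + 1 : ℕ) : ZMod p)))
        = ∑ y : ZMod p, χ (ι (y * ((n + 1 : ℕ) : ZMod p)⁻¹)) * e y := by
      refine Fintype.sum_equiv (Equiv.mulRight₀ ((n + 1 : ℕ) : ZMod p) hu) _ _ (fun z0 => ?_)
      show χ (ι z0) * e (z0 * ((n + 1 : ℕ) : ZMod p))
          = χ (ι (z0 * ((n + 1 : ℕ) : ZMod p) * ((n + 1 : ℕ) : ZMod p)⁻¹))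
            * e (z0 * ((n + 1 : ℕ) : ZMod p))
      rw [mul_inv_cancel_right₀ hu]
    have hχinv : χ (ι (((n + 1 : ℕ) : ZMod p)⁻¹)) = (starRingEnd ℂ) (χ ((n + 1 : ℕ) : K)) := by
      have hKr : ι ((n + 1 : ℕ) : ZMod p) = ((n + 1 : ℕ) : K) := map_natCast ι _
      have h3 : χ (ι (((n + 1 : ℕ) : ZMod p)⁻¹)) * χ ((n + 1 : ℕ) : K) = 1 := by
        rw [← hKr, ← map_mul, ← map_mul, inv_mul_cancel₀ hu, map_one, map_one]
      rw [hconjχ]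
      exact eq_inv_of_mul_eq_one_left h3
    rw [h2, gaussSumP, Finset.mul_sum]
    apply Finset.sum_congr rfl
    intro y _
    rw [map_mul ι, map_mul χ, hχinv, he]
    ring
  have part1 : gaussSumF p K (fun y => χ y)
      = (starRingEnd ℂ) (χ ((n + 1 : ℕ) : K)) * gaussSumP p (fun y => χ (ι y))
        * Bfactor p (n + 1) K (fun y => χ y) α := by
    rw [key, hTsum, hBf]
  -- Part 2
  haveI : Fact (1 < p) := ⟨hp1⟩
  set t : (Fin n → ZMod p) → ℂ := fun z => χ (1 + w z) with ht_def
  have ht3 : ∀ z, t z ^ 3 = 1 := fun z => hχ3 _ (h1w z)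
  have htcases : ∀ z, t z = 1 ∨ t z = zeta3 ∨ t z = zeta3 ^ 2 := fun z => cube_root_cases (ht3 z)
  set A1 : Finset (Fin n → ZMod p) := univ.filter (fun z => t z = 1) with hA1
  set R1 : Finset (Fin n → ZMod p) := univ.filter (fun z => ¬ t z = 1) with hR1
  set A2 : Finset (Fin n → ZMod p) := R1.filter (fun z => t z = zeta3) with hA2
  set A3 : Finset (Fin n → ZMod p) := R1.filter (fun z => ¬ t z = zeta3) with hA3
  have hBt : B = ∑ z : Fin n → ZMod p, t z := hB_def
  have hsplit : B = ∑ z ∈ A1, t z + (∑ z ∈ A2, t z + ∑ z ∈ A3, t z) := by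
    rw [hBt, ← Finset.sum_filter_add_sum_filter_not univ (fun z => t z = 1) t,
      ← Finset.sum_filter_add_sum_filter_not R1 (fun z => t z = zeta3) t]
  have hv1 : ∑ z ∈ A1, t z = (A1.card : ℂ) := by
    rw [Finset.sum_congr rfl (fun z hz => (Finset.mem_filter.mp hz).2), Finset.sum_const,
      nsmul_eq_mul, mul_one]
  have hv2 : ∑ z ∈ A2, t z = (A2.card : ℂ) * zeta3 := by
    rw [Finset.sum_congr rfl (fun z hz => (Finset.mem_filter.mp hz).2), Finset.sum_const,
      nsmul_eq_mul]
  have hv3 : ∑ z ∈ A3, t z = (A3.card : ℂ) * zeta3 ^ 2 := by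
    have hval : ∀ z ∈ A3, t z = zeta3 ^ 2 := by
      intro z hz
      obtain ⟨hz1, hz2⟩ := Finset.mem_filter.mp hz
      rcases htcases z with h | h | h
      · exact absurd h (Finset.mem_filter.mp hz1).2
      · exact absurd h hz2
      · exact h
    rw [Finset.sum_congr rfl hval, Finset.sum_const, nsmul_eq_mul]
  have hsum_eq : B = (A1.card : ℂ) + (A2.card : ℂ) * zeta3 + (A3.card : ℂ) * zeta3 ^ 2 := by
    rw [hsplit, hv1, hv2, hv3]; ring
  have hcardU : (univ : Finset (Fin n → ZMod p)).card = p ^ n := by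
    simp [Finset.card_univ, ZMod.card]
  have hcardsum : A1.card + A2.card + A3.card = p ^ n := by
    have h1 := Finset.card_filter_add_card_filter_not
      (s := (univ : Finset (Fin n → ZMod p))) (p := fun z => t z = 1)
    have h2 := Finset.card_filter_add_card_filter_not
      (s := R1) (p := fun z => t z = zeta3)
    rw [hcardU] at h1
    rw [← hA1, ← hR1] at h1
    rw [← hA2, ← hA3] at h2
    omega
  -- Gauss sum magnitudes
  have hχne : χ ≠ 1 := by
    intro h
    rw [h, orderOf_one] at hord
    omega
  have hψprim : ψ.IsPrimitive := by
    apply AddChar.IsPrimitive.of_ne_one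
    intro hψ1
    obtain ⟨y, hy⟩ := Algebra.trace_surjective (ZMod p) K 1
    have h1 : ψ y = 1 := by rw [hψ1]; rfl
    rw [hψ, hy, he, ZMod.val_one, pow_one] at h1
    exact hζ.ne_one hp1 h1
  have hGr : gaussSumF p K (fun y => χ y) = gaussSum χ ψ := rfl
  have hconjGr : (starRingEnd ℂ) (gaussSum χ ψ) = gaussSum χ⁻¹ ψ⁻¹ := by
    rw [gaussSum, gaussSum, map_sum]
    apply Finset.sum_congr rfl
    intro y _
    rw [map_mul, hconjχ, hconjψ, MulChar.inv_apply_eq_inv', AddChar.inv_apply']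
  have hGrGr : gaussSum χ ψ * (starRingEnd ℂ) (gaussSum χ ψ) = (p : ℂ) ^ (n + 1) := by
    rw [hconjGr, gaussSum_mul_gaussSum_eq_card hχne hψprim, hcard]
    push_cast
    ring
  set χ₀ : MulChar (ZMod p) ℂ :=
    { toFun := fun x => χ (ι x)
      map_one' := by show χ (ι 1) = 1; simp only [map_one]
      map_mul' := fun x y => by show χ (ι (x * y)) = χ (ι x) * χ (ι y); simp only [map_mul]
      map_nonunit' := fun x hx => by
        have hx0 : x = 0 := by
          by_contra h
          exact hx (isUnit_iff_ne_zero.mpr h)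
        show χ (ι x) = 0
        rw [hx0, map_zero, MulChar.map_zero] } with hχ₀def
  have hχ₀ : ∀ x, χ₀ x = χ (ι x) := fun x => rfl
  have hχ₀ne : χ₀ ≠ 1 := by
    obtain ⟨c, hc0, hc1⟩ := hres
    intro h
    apply hc1
    calc χ (ι c) = χ₀ c := rfl
      _ = (1 : MulChar (ZMod p) ℂ) c := by rw [h]
      _ = 1 := MulChar.one_apply (isUnit_iff_ne_zero.mpr hc0)
  have heprim : e.IsPrimitive := by
    apply AddChar.IsPrimitive.of_ne_one
    intro h1
    have h2 : e 1 = 1 := by rw [h1]; rfl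
    rw [he, ZMod.val_one, pow_one] at h2
    exact hζ.ne_one hp1 h2
  have hG1 : gaussSumP p (fun y => χ (ι y)) = gaussSum χ₀ e := rfl
  have hconjχ₀ : ∀ x, (starRingEnd ℂ) (χ₀ x) = (χ₀ x)⁻¹ := fun x => hconjχ (ι x)
  have hconjG1 : (starRingEnd ℂ) (gaussSum χ₀ e) = gaussSum χ₀⁻¹ e⁻¹ := by
    rw [gaussSum, gaussSum, map_sum]
    apply Finset.sum_congr rfl
    intro y _
    rw [map_mul, hconjχ₀, hconje, MulChar.inv_apply_eq_inv', AddChar.inv_apply']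
  have hG1G1 : gaussSum χ₀ e * (starRingEnd ℂ) (gaussSum χ₀ e) = (p : ℂ) := by
    rw [hconjG1, gaussSum_mul_gaussSum_eq_card hχ₀ne heprim, ZMod.card]
  have hrKne : ((n + 1 : ℕ) : K) ≠ 0 := by
    intro h
    apply hrK
    apply (algebraMap (ZMod p) K).injective
    rw [map_natCast, map_zero]
    exact h
  have hχrne : χ ((n + 1 : ℕ) : K) ≠ 0 := by
    intro h
    have h3 := hχ3 _ hrKne
    rw [h] at h3
    norm_num at h3
  have hc_unit : χ ((n + 1 : ℕ) : K) * (starRingEnd ℂ) (χ ((n + 1 : ℕ) : K)) = 1 := by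
    rw [hconjχ]
    exact mul_inv_cancel₀ hχrne
  have hpne : (p : ℂ) ≠ 0 := Nat.cast_ne_zero.mpr (NeZero.ne p)
  have hBB : B * (starRingEnd ℂ) B = (p : ℂ) ^ n := by
    have hE : gaussSum χ ψ
        = (starRingEnd ℂ) (χ ((n + 1 : ℕ) : K)) * gaussSum χ₀ e * B := by
      rw [← hGr, ← hG1, part1, hBf]
    have lhs : gaussSum χ ψ * (starRingEnd ℂ) (gaussSum χ ψ)
        = (χ ((n + 1 : ℕ) : K) * (starRingEnd ℂ) (χ ((n + 1 : ℕ) : K)))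
          * (gaussSum χ₀ e * (starRingEnd ℂ) (gaussSum χ₀ e))
          * (B * (starRingEnd ℂ) B) := by
      conv_lhs => rw [hE]
      simp only [map_mul, Complex.conj_conj]
      ring
    rw [hGrGr, hG1G1, hc_unit, one_mul] at lhs
    have h4 : (p : ℂ) * (B * (starRingEnd ℂ) B) = (p : ℂ) * (p : ℂ) ^ n := by
      rw [← lhs, pow_succ]
      ring
    exact mul_left_cancel₀ hpne h4
  have hconj3 : (starRingEnd ℂ) zeta3 = zeta3 ^ 2 := by
    rw [conj_eq_inv_of_pow three_ne_zero zeta3_pow_three]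
    exact inv_eq_of_mul_eq_one_left (by linear_combination zeta3_pow_three)
  have hfinalC : ((A1.card : ℂ) ^ 2 + (A2.card : ℂ) ^ 2 + (A3.card : ℂ) ^ 2
      - (A1.card : ℂ) * (A2.card : ℂ) - (A2.card : ℂ) * (A3.card : ℂ)
      - (A3.card : ℂ) * (A1.card : ℂ)) = (p : ℂ) ^ n := by
    rw [← hBB, hsum_eq]
    simp only [map_add, map_mul, map_pow, Complex.conj_natCast, hconj3]
    linear_combination (-((A1.card : ℂ) * (A2.card : ℂ)) - (A1.card : ℂ) * (A3.card : ℂ)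
        - (A2.card : ℂ) * (A3.card : ℂ)) * zeta3_sq_add
      + (-((A2.card : ℂ) ^ 2) - (A3.card : ℂ) ^ 2 * (zeta3 ^ 3 + 1)
        - (A1.card : ℂ) * (A3.card : ℂ) * zeta3
        - (A2.card : ℂ) * (A3.card : ℂ) * (zeta3 + zeta3 ^ 2)) * zeta3_pow_three
  refine ⟨part1, A1.card, A2.card, A3.card, ?_, ?_, ?_⟩
  · rw [hBf]
    exact hsum_eq
  · rw [hrsub]
    exact hcardsum
  · rw [hrsub]
    have hcast : (((A1.card : ℤ) ^ 2 + (A2.card : ℤ) ^ 2 + (A3.card : ℤ) ^ 2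
        - A1.card * A2.card - A2.card * A3.card - A3.card * A1.card : ℤ) : ℂ)
        = (((p : ℤ) ^ n : ℤ) : ℂ) := by
      push_cast
      linear_combination hfinalC
    exact_mod_cast hcast
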